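/- arXiv:1110.2813 — 2 statements merged into one kernel-verified Lean document; each statement's English description precedes it below -/
import Mathlib

section
/- Let n ≥ 2 and let G and H be connected simple graphs on the vertex set Fin n. Suppose there exists a real constant c > 0 such that xᵀ L_G x = c · xᵀ L_H x for every vector x ∈ ℝⁿ with ∑ i, x i = 0. Then c = 1 and G = H. -/
open Matrix Finset

private lemma symm_dot_comm {n : ℕ} (M : Matrix (Fin n) (Fin n) ℝ) (hM : M.IsSymm)
    (x y : Fin n → ℝ) : x ⬝ᵥ M *ᵥ y = y ⬝ᵥ M *ᵥ x := by
  conv_lhs => rw [dotProduct_mulVec, ← hM, vecMul_transpose]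
  rw [dotProduct_comm]

private lemma exists_adj_of_connected {n : ℕ} (hn : 2 ≤ n) (G : SimpleGraph (Fin n))
    (hG : G.Connected) : ∃ i j, G.Adj i j := by
  have h01 : (⟨0, by omega⟩ : Fin n) ≠ ⟨1, by omega⟩ := by
    simp [Fin.ext_iff]
  obtain ⟨w⟩ := hG.preconnected ⟨0, by omega⟩ ⟨1, by omega⟩
  cases w with
  | cons ha _ => exact ⟨_, _, ha⟩

/-- Let `n ≥ 2` and let `G`, `H` be connected simple graphs on `Fin n`. If there
is a constant `c > 0` such that `xᵀ L_G x = c · xᵀ L_H x` for every vector `x ∈ ℝⁿ` with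
`∑ i, x i = 0`, then `c = 1` and `G = H`. -/
theorem eq_of_lap_quadForm_proportional
    {n : ℕ} (hn : 2 ≤ n) (G H : SimpleGraph (Fin n))
    [DecidableRel G.Adj] [DecidableRel H.Adj]
    (hG : G.Connected) (hH : H.Connected)
    (c : ℝ) (hc : 0 < c)
    (h : ∀ x : Fin n → ℝ, ∑ i, x i = 0 →
      x ⬝ᵥ (G.lapMatrix ℝ) *ᵥ x = c * (x ⬝ᵥ (H.lapMatrix ℝ) *ᵥ x)) :
    c = 1 ∧ G = H := by
  set M : Matrix (Fin n) (Fin n) ℝ := G.lapMatrix ℝ - c • H.lapMatrix ℝ with hMdef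
  have hMsymm : M.IsSymm := by
    rw [Matrix.IsSymm, hMdef, transpose_sub, transpose_smul, (G.isSymm_lapMatrix (R := ℝ)).eq, (H.isSymm_lapMatrix (R := ℝ)).eq]
  have hMq : ∀ x : Fin n → ℝ, ∑ i, x i = 0 → x ⬝ᵥ M *ᵥ x = 0 := by
    intro x hx
    rw [hMdef, sub_mulVec, dotProduct_sub, smul_mulVec, dotProduct_smul, smul_eq_mul,
      h x hx, sub_self]
  have hMone : M *ᵥ (fun _ => 1) = 0 := by
    rw [hMdef, sub_mulVec, smul_mulVec, G.lapMatrix_mulVec_const_eq_zero,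
      H.lapMatrix_mulVec_const_eq_zero, smul_zero, sub_zero]
  -- quadratic form vanishes on all vectors
  have hMqall : ∀ x : Fin n → ℝ, x ⬝ᵥ M *ᵥ x = 0 := by
    intro x
    set t : ℝ := (∑ i, x i) / n with ht
    set y : Fin n → ℝ := x - t • (fun _ => (1:ℝ)) with hy
    have hny : ∑ i, y i = 0 := by
      have hn0 : (n : ℝ) ≠ 0 := by positivity
      simp only [hy, Pi.sub_apply, Pi.smul_apply, smul_eq_mul, mul_one, sum_sub_distrib,
        sum_const, card_univ, Fintype.card_fin, nsmul_eq_mul, ht]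
      field_simp
      ring
    have hx : x = y + t • (fun (_ : Fin n) => (1:ℝ)) := by simp [hy]
    rw [hx, mulVec_add, mulVec_smul, hMone, smul_zero, add_zero,
      add_dotProduct, hMq y hny, zero_add, smul_dotProduct, smul_eq_mul]
    have : (fun _ => (1:ℝ)) ⬝ᵥ M *ᵥ y = 0 := by
      rw [symm_dot_comm M hMsymm, hMone, dotProduct_zero]
    rw [this, mul_zero]
  -- polarization: M = 0
  have hM0 : ∀ i j, M i j = 0 := by
    intro i j
    have hpol := hMqall (Pi.single i 1 + Pi.single j 1)
    rw [mulVec_add, dotProduct_add, add_dotProduct, add_dotProduct,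
      hMqall (Pi.single i 1) , hMqall (Pi.single j 1)] at hpol
    rw [symm_dot_comm M hMsymm (Pi.single j 1) (Pi.single i 1)] at hpol
    simp only [mulVec_single, single_dotProduct, one_mul, mul_one, zero_add, add_zero,
      MulOpposite.op_one, one_smul, Matrix.col_apply] at hpol
    linarith
  -- entries of M off-diagonal
  have hent : ∀ i j, i ≠ j → -(if G.Adj i j then (1:ℝ) else 0) + c * (if H.Adj i j then (1:ℝ) else 0) = 0 := by
    intro i j hij
    have := hM0 i j
    rw [hMdef] at this
    simp only [Matrix.sub_apply, Matrix.smul_apply, smul_eq_mul] at this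
    have hGe : G.lapMatrix ℝ i j = -(if G.Adj i j then (1:ℝ) else 0) := by
      simp [SimpleGraph.lapMatrix, SimpleGraph.degMatrix, hij]
    have hHe : H.lapMatrix ℝ i j = -(if H.Adj i j then (1:ℝ) else 0) := by
      simp [SimpleGraph.lapMatrix, SimpleGraph.degMatrix, hij]
    rw [hGe, hHe] at this
    linarith
  have hc1 : c = 1 := by
    obtain ⟨i, j, hadj⟩ := exists_adj_of_connected hn G hG
    have := hent i j hadj.ne
    rw [if_pos hadj] at this
    by_cases hH' : H.Adj i j
    · rw [if_pos hH'] at this; linarith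
    · rw [if_neg hH'] at this; simp at this
  refine ⟨hc1, ?_⟩
  ext i j
  by_cases hij : i = j
  · subst hij; simp
  · have := hent i j hij
    rw [hc1, one_mul] at this
    constructor <;> intro hadj
    · rw [if_pos hadj] at this
      by_cases hH' : H.Adj i j
      · exact hH'
      · rw [if_neg hH'] at this; norm_num at this
    · rw [if_pos hadj] at this
      by_cases hG' : G.Adj i j
      · exact hG'
      · rw [if_neg hG'] at this; norm_num at this
end

section
/- Let n ≥ 2 and let G and H be connected simple graphs on the vertex set Fin n. Then κ(L_G, L_H) = 1 if and only if G = H, where κ(L_G, L_H) = sSup R(G,H) · sSup R(H,G) and R(G,H) = {(xᵀL_Gx)/(xᵀL_Hx) : x ∈ ℝⁿ, x ≠ 0, ∑ i, x i = 0}. -/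
open Matrix Finset

/-- The real Laplacian matrix of a simple graph on `Fin n` (Mathlib's
`SimpleGraph.lapMatrix` with real entries, using classical decidability of adjacency). -/
noncomputable def lapR {n : ℕ} (G : SimpleGraph (Fin n)) : Matrix (Fin n) (Fin n) ℝ :=
  letI := Classical.decRel G.Adj
  G.lapMatrix ℝ

/-- The Rayleigh ratio set
`R(G,H) = {(xᵀ L_G x)/(xᵀ L_H x) : x ∈ ℝⁿ, x ≠ 0, ∑ i, x i = 0}`. -/
def raySet {n : ℕ} (G H : SimpleGraph (Fin n)) : Set ℝ :=
  {r | ∃ x : Fin n → ℝ, x ≠ 0 ∧ ∑ i, x i = 0 ∧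
    r = (x ⬝ᵥ (lapR G) *ᵥ x) / (x ⬝ᵥ (lapR H) *ᵥ x)}

lemma lapR_quad_nonneg {n : ℕ} (G : SimpleGraph (Fin n)) (x : Fin n → ℝ) :
    0 ≤ x ⬝ᵥ lapR G *ᵥ x := by
  letI := Classical.decRel G.Adj
  have := (SimpleGraph.posSemidef_lapMatrix ℝ G).dotProduct_mulVec_nonneg x
  simpa [lapR] using this

lemma lapR_quad_pos {n : ℕ} {G : SimpleGraph (Fin n)} (hG : G.Connected)
    {x : Fin n → ℝ} (hx : x ≠ 0) (hs : ∑ i, x i = 0) :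
    0 < x ⬝ᵥ lapR G *ᵥ x := by
  letI := Classical.decRel G.Adj
  obtain ⟨i0, hi0⟩ := Function.ne_iff.mp hx
  rcases (lapR_quad_nonneg G x).lt_or_eq with h | h
  · exact h
  exfalso
  have h0 : Matrix.toLinearMap₂' ℝ (G.lapMatrix ℝ) x x = 0 := by
    rw [Matrix.toLinearMap₂'_apply']; exact h.symm
  rw [SimpleGraph.lapMatrix_toLinearMap₂'_apply'_eq_zero_iff_forall_reachable] at h0
  have hconst : ∀ i, x i = x i0 := fun i => h0 i i0 (hG.preconnected i i0)
  have hsum : (0 : ℝ) = (n : ℝ) * x i0 := by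
    rw [← hs, Finset.sum_congr rfl fun i _ => hconst i, Finset.sum_const, Finset.card_univ,
      Fintype.card_fin, nsmul_eq_mul]
  have hn : (n : ℝ) ≠ 0 := Nat.cast_ne_zero.mpr i0.pos.ne'
  have : x i0 = 0 := by
    rcases mul_eq_zero.mp hsum.symm with h' | h'
    · exact absurd h' hn
    · exact h'
  exact hi0 (by simpa using this)

/-- The standard test vector `e₀ - e₁`. -/
noncomputable def testVec (n : ℕ) : Fin n → ℝ :=
  fun i => if (i : ℕ) = 0 then 1 else if (i : ℕ) = 1 then -1 else 0

lemma testVec_ne_zero {n : ℕ} (hn : 2 ≤ n) : testVec n ≠ 0 := by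
  intro h
  have h0 : testVec n ⟨0, by omega⟩ = 0 := by rw [h]; rfl
  simp [testVec] at h0

lemma testVec_sum {n : ℕ} (hn : 2 ≤ n) : ∑ i, testVec n i = 0 := by
  have h01 : (⟨0, by omega⟩ : Fin n) ≠ ⟨1, by omega⟩ := by
    simp [Fin.ext_iff]
  rw [show (univ : Finset (Fin n)) = insert ⟨0, by omega⟩ (insert ⟨1, by omega⟩
      ((univ : Finset (Fin n)) \ {⟨0, by omega⟩, ⟨1, by omega⟩})) from ?_]
  · rw [Finset.sum_insert, Finset.sum_insert]
    · have : ∑ i ∈ (univ : Finset (Fin n)) \ {⟨0, by omega⟩, ⟨1, by omega⟩}, testVec n i = 0 := by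
        apply Finset.sum_eq_zero
        intro i hi
        simp only [Finset.mem_sdiff, Finset.mem_insert, Finset.mem_singleton] at hi
        have h1 : (i : ℕ) ≠ 0 := fun h => hi.2 (Or.inl (Fin.ext h))
        have h2 : (i : ℕ) ≠ 1 := fun h => hi.2 (Or.inr (Fin.ext h))
        simp [testVec, h1, h2]
      rw [this]
      simp [testVec]
    · simp
    · simp [h01]
  · ext i
    simp only [Finset.mem_insert, Finset.mem_sdiff, Finset.mem_univ, Finset.mem_singleton,
      true_and, Finset.mem_insert]
    tauto

lemma raySet_self_mem {n : ℕ} (hn : 2 ≤ n) {G : SimpleGraph (Fin n)} (hG : G.Connected) :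
    (1 : ℝ) ∈ raySet G G := by
  refine ⟨testVec n, testVec_ne_zero hn, testVec_sum hn, ?_⟩
  rw [div_self (lapR_quad_pos hG (testVec_ne_zero hn) (testVec_sum hn)).ne']

lemma raySet_self {n : ℕ} (hn : 2 ≤ n) {G : SimpleGraph (Fin n)} (hG : G.Connected) :
    raySet G G = {1} := by
  ext r
  constructor
  · rintro ⟨x, hx, hs, rfl⟩
    simp [div_self (lapR_quad_pos hG hx hs).ne']
  · rintro rfl
    exact raySet_self_mem hn hG

/-- An edge exists in a connected graph on at least two vertices. -/
lemma exists_adj {n : ℕ} (hn : 2 ≤ n) {G : SimpleGraph (Fin n)} (hG : G.Connected) :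
    ∃ i j, G.Adj i j := by
  by_contra h
  push_neg at h
  have hbot : G = ⊥ := by
    ext i j
    simp [h i j]
  have := hG.preconnected (⟨0, by omega⟩ : Fin n) ⟨1, by omega⟩
  rw [hbot, SimpleGraph.reachable_bot] at this
  simp [Fin.ext_iff] at this

open scoped Classical in
/-- Entry description of `lapR` off the diagonal. -/
lemma lapR_off_diag {n : ℕ} (G : SimpleGraph (Fin n)) {i j : Fin n} (hij : i ≠ j) :
    lapR G i j = if G.Adj i j then (-1 : ℝ) else 0 := by
  letI := Classical.decRel G.Adj
  classical
  show (G.lapMatrix ℝ) i j = _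
  rw [SimpleGraph.lapMatrix]
  simp only [Matrix.sub_apply, SimpleGraph.degMatrix, SimpleGraph.adjMatrix_apply,
    Matrix.diagonal_apply_ne _ hij]
  by_cases h : G.Adj i j <;> simp [h]

/-- Let `n ≥ 2` and let `G`, `H` be connected simple graphs on `Fin n`. Then the
generalized condition number `κ(L_G, L_H) = sSup R(G,H) · sSup R(H,G)` equals `1` iff
`G = H`. -/
theorem condNumber_eq_one_iff_eq
    {n : ℕ} (hn : 2 ≤ n) (G H : SimpleGraph (Fin n))
    (hG : G.Connected) (hH : H.Connected) :
    sSup (raySet G H) * sSup (raySet H G) = 1 ↔ G = H := by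
  classical
  constructor
  · intro hprod
    -- boundedness must hold, else a sSup is 0
    by_cases hb1 : BddAbove (raySet G H)
    swap
    · rw [Real.sSup_of_not_bddAbove hb1, zero_mul] at hprod; norm_num at hprod
    by_cases hb2 : BddAbove (raySet H G)
    swap
    · rw [Real.sSup_of_not_bddAbove hb2, mul_zero] at hprod; norm_num at hprod
    set S := sSup (raySet G H) with hS
    set T := sSup (raySet H G) with hT
    -- positivity of S
    have hmemGH : (testVec n ⬝ᵥ lapR G *ᵥ testVec n) / (testVec n ⬝ᵥ lapR H *ᵥ testVec n)
        ∈ raySet G H := ⟨testVec n, testVec_ne_zero hn, testVec_sum hn, rfl⟩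
    have hSpos : 0 < S := lt_of_lt_of_le
      (div_pos (lapR_quad_pos hG (testVec_ne_zero hn) (testVec_sum hn))
        (lapR_quad_pos hH (testVec_ne_zero hn) (testVec_sum hn)))
      (le_csSup hb1 hmemGH)
    have hTpos : 0 < T := by
      nlinarith
    -- key: for every admissible x the ratio is exactly S
    have hkey : ∀ x : Fin n → ℝ, x ≠ 0 → ∑ i, x i = 0 →
        x ⬝ᵥ lapR G *ᵥ x = S * (x ⬝ᵥ lapR H *ᵥ x) := by
      intro x hx hs
      have hQG : 0 < x ⬝ᵥ lapR G *ᵥ x := lapR_quad_pos hG hx hs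
      have hQH : 0 < x ⬝ᵥ lapR H *ᵥ x := lapR_quad_pos hH hx hs
      have h1 : (x ⬝ᵥ lapR G *ᵥ x) / (x ⬝ᵥ lapR H *ᵥ x) ≤ S :=
        le_csSup hb1 ⟨x, hx, hs, rfl⟩
      have h2 : (x ⬝ᵥ lapR H *ᵥ x) / (x ⬝ᵥ lapR G *ᵥ x) ≤ T :=
        le_csSup hb2 ⟨x, hx, hs, rfl⟩
      have h1' : x ⬝ᵥ lapR G *ᵥ x ≤ S * (x ⬝ᵥ lapR H *ᵥ x) := by
        rw [div_le_iff₀ hQH] at h1; linarith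
      have h2' : x ⬝ᵥ lapR H *ᵥ x ≤ T * (x ⬝ᵥ lapR G *ᵥ x) := by
        rw [div_le_iff₀ hQG] at h2; linarith
      nlinarith
    -- the matrix lapR G - S • lapR H has zero quadratic form everywhere
    have hones : ∀ (K : SimpleGraph (Fin n)), lapR K *ᵥ (fun _ => (1 : ℝ)) = 0 := by
      intro K
      letI := Classical.decRel K.Adj
      exact SimpleGraph.lapMatrix_mulVec_const_eq_zero K
    have hsymm : ∀ (K : SimpleGraph (Fin n)), (lapR K)ᵀ = lapR K := by
      intro K
      letI := Classical.decRel K.Adj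
      exact SimpleGraph.isSymm_lapMatrix ℝ K
    set M : Matrix (Fin n) (Fin n) ℝ := lapR G - S • lapR H with hM
    have hMsymm : Mᵀ = M := by
      rw [hM, Matrix.transpose_sub, Matrix.transpose_smul, hsymm, hsymm]
    have hMones : M *ᵥ (fun _ => (1 : ℝ)) = 0 := by
      rw [hM, Matrix.sub_mulVec, Matrix.smul_mulVec, hones, hones, smul_zero, sub_zero]
    have hquadM0 : ∀ x : Fin n → ℝ, ∑ i, x i = 0 → x ⬝ᵥ M *ᵥ x = 0 := by
      intro x hs
      by_cases hx : x = 0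
      · subst hx; simp
      · have := hkey x hx hs
        rw [hM, Matrix.sub_mulVec, Matrix.smul_mulVec, dotProduct_sub, dotProduct_smul]
        rw [this]; ring_nf
    have hquadAll : ∀ x : Fin n → ℝ, x ⬝ᵥ M *ᵥ x = 0 := by
      intro x
      set t : ℝ := (∑ i, x i) / n with ht
      set y : Fin n → ℝ := x - (fun _ => t) with hy
      have hny : (n : ℝ) ≠ 0 := by positivity
      have hys : ∑ i, y i = 0 := by
        simp only [hy, Pi.sub_apply, Finset.sum_sub_distrib, Finset.sum_const,
          Finset.card_univ, Fintype.card_fin, nsmul_eq_mul, ht]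
        field_simp
        simp
      have hxy : x = y + (fun _ => t) := by rw [hy]; ring_nf
      rw [hxy]
      have hMc : M *ᵥ (fun _ => t) = 0 := by
        have : (fun (_ : Fin n) => t) = t • (fun _ => (1:ℝ)) := by funext i; simp
        rw [this, Matrix.mulVec_smul, hMones, smul_zero]
      have hcy : (fun _ => t) ⬝ᵥ M *ᵥ y = 0 := by
        rw [Matrix.dotProduct_mulVec, ← Matrix.mulVec_transpose, hMsymm, hMc]
        simp
      rw [Matrix.mulVec_add, dotProduct_add, add_dotProduct, add_dotProduct, hMc, hcy,
        dotProduct_zero, dotProduct_zero, hquadM0 y hys]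
      simp
    -- hence M = 0
    have hMzero : M = 0 := by
      ext i j
      have hdiag : ∀ k, M k k = 0 := by
        intro k
        have := hquadAll (Pi.single k 1)
        simpa using this
      by_cases hij : i = j
      · subst hij; simp [hdiag i]
      · have := hquadAll (Pi.single i 1 + Pi.single j 1)
        have hMji : M j i = M i j := congrFun (congrFun hMsymm i) j
        simp only [Matrix.mulVec_add, dotProduct_add, add_dotProduct, Matrix.mulVec_single_one,
          mul_one] at this
        have e1 : Pi.single i (1:ℝ) ⬝ᵥ M.col i = M i i := by
          rw [single_dotProduct]; simp [Matrix.col]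
        have e2 : Pi.single i (1:ℝ) ⬝ᵥ M.col j = M i j := by
          rw [single_dotProduct]; simp [Matrix.col]
        have e3 : Pi.single j (1:ℝ) ⬝ᵥ M.col i = M j i := by
          rw [single_dotProduct]; simp [Matrix.col]
        have e4 : Pi.single j (1:ℝ) ⬝ᵥ M.col j = M j j := by
          rw [single_dotProduct]; simp [Matrix.col]
        rw [e1, e2, e3, e4, hdiag i, hdiag j, hMji] at this
        simp only [Matrix.zero_apply]
        linarith
    have hGH : ∀ i j : Fin n, i ≠ j →
        (if G.Adj i j then (-1:ℝ) else 0) = S * (if H.Adj i j then (-1:ℝ) else 0) := by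
      intro i j hij
      have : lapR G i j - S * lapR H i j = 0 := by
        have := congrFun (congrFun hMzero i) j
        simpa [hM, smul_eq_mul] using this
      rw [lapR_off_diag G hij, lapR_off_diag H hij] at this
      linarith
    -- get S = 1 using an edge of G
    obtain ⟨i, j, hadj⟩ := exists_adj hn hG
    have hij : i ≠ j := hadj.ne
    have hS1 : S = 1 := by
      have h := hGH i j hij
      rw [if_pos hadj] at h
      by_cases hh : H.Adj i j
      · rw [if_pos hh] at h; linarith
      · rw [if_neg hh] at h; norm_num at h
    -- conclude G = H
    ext a b
    by_cases hab : a = b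
    · subst hab; simp
    · have h := hGH a b hab
      rw [hS1, one_mul] at h
      by_cases hga : G.Adj a b <;> by_cases hha : H.Adj a b <;>
        simp [hga, hha] at h ⊢
  · rintro rfl
    rw [raySet_self hn hG, csSup_singleton]
    norm_num
end
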